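/- Let p be a prime, and let m, ℓ ∈ ℕ₀ with m ≥ 1, and a, b ∈ ℚ, k ∈ ℕ₀. Then the intersection of the arithmetic progression {m·j + ℓ : j ∈ ℕ₀} with the p-arithmetic sequence {a·p^{k·n} + b : n ∈ ℕ₀} is a finite union of p-arithmetic sequences, where a p-arithmetic sequence is any set of the form {c·p^{k'·n} + d : n ∈ ℕ₀} for some c, d ∈ ℚ and k' ∈ ℕ₀. -/

import Mathlib

/-- A `p`-arithmetic sequence: a subset of `ℚ` of the form
`{a·p^{kn} + b : n ∈ ℕ₀}` for some `a, b ∈ ℚ` and `k ∈ ℕ₀`. -/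
def IsPArithSeq (p : ℕ) (S : Set ℚ) : Prop :=
  ∃ (a b : ℚ) (k : ℕ), S = {x : ℚ | ∃ n : ℕ, x = a * (p : ℚ) ^ (k * n) + b}

/-- A finite union of `p`-arithmetic sequences. -/
def IsFinUnionPArith (p : ℕ) (S : Set ℚ) : Prop :=
  ∃ (M : ℕ) (f : Fin M → Set ℚ), (∀ i, IsPArithSeq p (f i)) ∧ S = ⋃ i, f i

/-- The intersection of an arithmetic progression `{m·j + ℓ : j ∈ ℕ₀}`
(with `m ≥ 1`) with a `p`-arithmetic sequence `{a·p^{kn} + b : n ∈ ℕ₀}` is a finite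
union of `p`-arithmetic sequences. -/
lemma fin_empty (p : ℕ) : IsFinUnionPArith p (∅ : Set ℚ) :=
  ⟨0, Fin.elim0, fun i => i.elim0, by simp⟩

lemma fin_of_seq {p : ℕ} {S : Set ℚ} (h : IsPArithSeq p S) : IsFinUnionPArith p S :=
  ⟨1, fun _ => S, fun _ => h, (Set.iUnion_const S).symm⟩

lemma seq_singleton (p : ℕ) (x : ℚ) : IsPArithSeq p {x} :=
  ⟨0, x, 0, by ext y; simp [eq_comm]⟩

lemma fin_union {p : ℕ} {S T : Set ℚ} (hS : IsFinUnionPArith p S)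
    (hT : IsFinUnionPArith p T) : IsFinUnionPArith p (S ∪ T) := by
  obtain ⟨M, f, hf, rfl⟩ := hS
  obtain ⟨N, g, hg, rfl⟩ := hT
  refine ⟨M + N, fun i => Sum.elim f g (finSumFinEquiv.symm i), fun i => ?_, ?_⟩
  · rcases h : finSumFinEquiv.symm i with a | b
    · simpa [h] using hf a
    · simpa [h] using hg b
  · have h1 : (⋃ i, (fun i => Sum.elim f g (finSumFinEquiv.symm i)) i)
        = ⋃ s : Fin M ⊕ Fin N, Sum.elim f g s := finSumFinEquiv.symm.surjective.iUnion_comp _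
    rw [h1, Set.iUnion_sum]
    simp

lemma fin_biUnion {p : ℕ} (s : Finset ℕ) (F : ℕ → Set ℚ)
    (h : ∀ i ∈ s, IsFinUnionPArith p (F i)) :
    IsFinUnionPArith p (⋃ i ∈ s, F i) := by
  classical
  induction s using Finset.induction with
  | empty => simpa using fin_empty p
  | @insert x s hx ih =>
      rw [Finset.set_biUnion_insert]
      exact fin_union (h _ (Finset.mem_insert_self _ _))
        (ih fun i hi => h i (Finset.mem_insert_of_mem hi))

lemma decomp (p : ℕ) (a b : ℚ) (k : ℕ) (AP : Set ℚ) (N₁ q : ℕ) (hq : 1 ≤ q)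
    (hper : ∀ n, N₁ ≤ n →
      ((a * (p:ℚ) ^ (k*n) + b) ∈ AP ↔ (a * (p:ℚ) ^ (k*(n+q)) + b) ∈ AP)) :
    IsFinUnionPArith p (AP ∩ {x : ℚ | ∃ n : ℕ, x = a * (p:ℚ) ^ (k * n) + b}) := by
  classical
  set v : ℕ → ℚ := fun n => a * (p:ℚ) ^ (k*n) + b with hv
  -- iterated periodicity
  have hstep : ∀ c, c < q → ∀ t : ℕ, (v (N₁+c) ∈ AP ↔ v (N₁+c+q*t) ∈ AP) := by
    intro c hc t
    induction t with
    | zero => simp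
    | succ t ih =>
        have h1 : N₁ + c + q*(t+1) = (N₁ + c + q*t) + q := by ring
        rw [h1, ih]
        exact hper _ (by omega)
  -- the pieces
  set F : ℕ → Set ℚ := fun n => if v n ∈ AP then {v n} else ∅ with hF
  set G : ℕ → Set ℚ := fun c =>
    if v (N₁+c) ∈ AP then {x : ℚ | ∃ t : ℕ, x = (a * (p:ℚ)^(k*(N₁+c))) * (p:ℚ)^((k*q)*t) + b}
    else ∅ with hG
  have hGv : ∀ c t, (a * (p:ℚ)^(k*(N₁+c))) * (p:ℚ)^((k*q)*t) + b = v (N₁+c+q*t) := by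
    intro c t
    have h1 : k*(N₁+c+q*t) = k*(N₁+c) + (k*q)*t := by ring
    rw [hv]
    simp only []
    rw [h1, pow_add, mul_assoc]
  have hset : AP ∩ {x : ℚ | ∃ n : ℕ, x = v n}
      = (⋃ n ∈ Finset.range N₁, F n) ∪ (⋃ c ∈ Finset.range q, G c) := by
    ext x
    constructor
    · rintro ⟨hx, n, rfl⟩
      by_cases hn : n < N₁
      · left
        simp only [Set.mem_iUnion, Finset.mem_range]
        exact ⟨n, hn, by rw [hF]; simp only [if_pos hx]; rfl⟩
      · right
        push_neg at hn
        obtain ⟨t, c, hc, hn'⟩ : ∃ t c, c < q ∧ n = N₁ + c + q*t :=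
          ⟨(n - N₁) / q, (n - N₁) % q, Nat.mod_lt _ hq, by
            have := Nat.mod_add_div (n - N₁) q; omega⟩
        have hmem : v (N₁+c) ∈ AP := (hstep c hc t).2 (by rwa [← hn'])
        simp only [Set.mem_iUnion, Finset.mem_range]
        refine ⟨c, hc, ?_⟩
        simp only [hG, if_pos hmem]
        exact ⟨t, by rw [hGv, ← hn']⟩
    · rintro (hx | hx) <;> simp only [Set.mem_iUnion, Finset.mem_range] at hx
      · obtain ⟨n, hn, hxn⟩ := hx
        by_cases h : v n ∈ AP
        · simp only [hF, if_pos h, Set.mem_singleton_iff] at hxn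
          rcases hxn with rfl
          exact ⟨h, n, rfl⟩
        · simp only [hF, if_neg h] at hxn
          exact absurd hxn (Set.notMem_empty x)
      · obtain ⟨c, hc, hxc⟩ := hx
        by_cases h : v (N₁+c) ∈ AP
        · simp only [hG, if_pos h, Set.mem_setOf_eq] at hxc
          obtain ⟨t, rfl⟩ := hxc
          rw [hGv]
          exact ⟨(hstep c hc t).1 h, _, rfl⟩
        · simp only [hG, if_neg h] at hxc
          exact absurd hxc (Set.notMem_empty x)
  rw [hset]
  refine fin_union (fin_biUnion _ _ fun n _ => ?_) (fin_biUnion _ _ fun c _ => ?_)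
  · by_cases h : v n ∈ AP
    · simp only [hF, if_pos h]; exact fin_of_seq (seq_singleton p _)
    · simp only [hF, if_neg h]; exact fin_empty p
  · by_cases h : v (N₁+c) ∈ AP
    · simp only [hG, if_pos h]
      exact fin_of_seq ⟨a * (p:ℚ)^(k*(N₁+c)), b, k*q, rfl⟩
    · simp only [hG, if_neg h]; exact fin_empty p


lemma key (p : ℕ) (hp : p.Prime) (m ℓ : ℕ) (hm : 1 ≤ m) (a b : ℚ) (k : ℕ) :
    ∃ N₁ q, 1 ≤ q ∧ ∀ n, N₁ ≤ n →
      ((a * (p:ℚ)^(k*n) + b) ∈ {x : ℚ | ∃ j : ℕ, x = (m:ℚ)*j + ℓ} ↔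
       (a * (p:ℚ)^(k*(n+q)) + b) ∈ {x : ℚ | ∃ j : ℕ, x = (m:ℚ)*j + ℓ}) := by
  classical
  set A : ℤ := a.num * b.den with hA
  set B : ℤ := b.num * a.den with hB
  set d : ℤ := (a.den : ℤ) * b.den with hd
  have hdpos : 0 < d := by rw [hd]; positivity
  have hm' : (0:ℤ) < m := by exact_mod_cast hm
  have hdm : 0 < d * m := mul_pos hdpos hm'
  set w : ℕ → ℤ := fun n => A * (p:ℤ)^(k*n) + B - d*(ℓ:ℤ) with hw
  have hval : ∀ n : ℕ, a * (p:ℚ)^(k*n) + b = ((A * (p:ℤ)^(k*n) + B : ℤ) : ℚ) / ((d:ℤ) : ℚ) := by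
    intro n
    have h1 : a * (a.den:ℚ) = a.num := Rat.mul_den_eq_num a
    have h2 : b * (b.den:ℚ) = b.num := Rat.mul_den_eq_num b
    rw [hA, hB, hd, eq_div_iff (by push_cast; positivity)]
    push_cast
    linear_combination ((p:ℚ)^(k*n) * b.den) * h1 + (a.den:ℚ) * h2
  have hdQ : ((d:ℤ):ℚ) ≠ 0 := by exact_mod_cast hdpos.ne'
  have hiff : ∀ n : ℕ,
      ((a * (p:ℚ)^(k*n) + b) ∈ {x : ℚ | ∃ j : ℕ, x = (m:ℚ)*j + ℓ}
        ↔ (d * m ∣ w n ∧ 0 ≤ w n)) := by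
    intro n
    constructor
    · rintro ⟨j, hj⟩
      rw [hval n, div_eq_iff hdQ] at hj
      have hZ : (A * (p:ℤ)^(k*n) + B : ℤ) = ((m:ℤ)*j + ℓ) * d := by exact_mod_cast hj
      have hwn : A * (p:ℤ)^(k*n) + B - d*(ℓ:ℤ) = (d*m) * j := by linear_combination hZ
      have hwn' : w n = (d*m) * j := hwn
      refine ⟨⟨j, hwn'⟩, ?_⟩
      rw [hwn']
      have : (0:ℤ) ≤ (j:ℤ) := by positivity
      nlinarith
    · rintro ⟨⟨c, hc⟩, h0⟩
      have hc' : A * (p:ℤ)^(k*n) + B - d*(ℓ:ℤ) = (d*m) * c := hc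
      have h0' : 0 ≤ A * (p:ℤ)^(k*n) + B - d*(ℓ:ℤ) := h0
      have hc0 : 0 ≤ c := by
        by_contra hneg
        push_neg at hneg
        have : (d*m) * c < 0 := mul_neg_of_pos_of_neg hdm hneg
        linarith
      refine ⟨c.toNat, ?_⟩
      rw [hval n, div_eq_iff hdQ]
      have h3 : (A * (p:ℤ)^(k*n) + B : ℤ) = ((m:ℤ)*c.toNat + ℓ) * d := by
        rw [Int.toNat_of_nonneg hc0]
        linear_combination hc'
      exact_mod_cast congrArg (Int.cast : ℤ → ℚ) h3
  by_cases hk : k = 0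
  · refine ⟨0, 1, le_refl 1, fun n _ => ?_⟩
    subst hk
    simp
  have hp2 : 2 ≤ p := hp.two_le
  have hgrow : ∀ n : ℕ, (n:ℤ) + 1 ≤ (p:ℤ)^(k*n) := by
    intro n
    have h1 : n < 2^n := Nat.lt_two_pow_self
    have h2 : (2:ℕ)^n ≤ (p^k)^n :=
      Nat.pow_le_pow_left (le_trans hp2 (Nat.le_self_pow hk p)) n
    have h3 : (p^k)^n = p^(k*n) := by rw [← pow_mul]
    have h4 : n + 1 ≤ p^(k*n) := by omega
    exact_mod_cast h4
  rcases lt_trichotomy A 0 with hA0 | hA0 | hA0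
  · -- A < 0 : eventually negative, both sides false
    refine ⟨(B - d*(ℓ:ℤ)).toNat, 1, le_refl 1, fun n hn => ?_⟩
    have hneg : ∀ n' : ℕ, (B - d*(ℓ:ℤ)).toNat ≤ n' → A * (p:ℤ)^(k*n') + B - d*(ℓ:ℤ) < 0 := by
      intro n' hn'
      have h1 : (n':ℤ) + 1 ≤ (p:ℤ)^(k*n') := hgrow n'
      have h2 : A ≤ -1 := by omega
      have h3 : B - d*(ℓ:ℤ) ≤ ((B - d*(ℓ:ℤ)).toNat : ℤ) := Int.self_le_toNat _
      have h4 : ((B - d*(ℓ:ℤ)).toNat:ℤ) ≤ n' := by exact_mod_cast hn'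
      nlinarith
    rw [hiff n, hiff (n+1)]
    constructor
    · rintro ⟨_, h0⟩
      have h0' : 0 ≤ A * (p:ℤ)^(k*n) + B - d*(ℓ:ℤ) := h0
      exact absurd h0' (not_le.mpr (hneg n hn))
    · rintro ⟨_, h0⟩
      have h0' : 0 ≤ A * (p:ℤ)^(k*(n+1)) + B - d*(ℓ:ℤ) := h0
      exact absurd h0' (not_le.mpr (hneg (n+1) (by omega)))
  · -- A = 0 : w is constant
    refine ⟨0, 1, le_refl 1, fun n _ => ?_⟩
    rw [hiff n, hiff (n+1), show w n = w (n+1) by simp [hw, hA0]]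
  · -- A > 0
    set D : ℕ := (d*m).toNat with hD
    have hDcast : (D:ℤ) = d*m := Int.toNat_of_nonneg hdm.le
    have hD0 : D ≠ 0 := by
      intro h
      rw [h] at hDcast
      push_cast at hDcast
      linarith
    haveI : NeZero D := ⟨hD0⟩
    set u : ZMod D := ((p:ℕ) : ZMod D)^k with hu
    obtain ⟨i, j, hne, hij⟩ := Fintype.exists_ne_map_eq_of_card_lt
      (fun i : Fin (D+1) => u^(i:ℕ)) (by simp [ZMod.card])
    obtain ⟨r, s, hrs, hu2⟩ : ∃ r s : ℕ, r < s ∧ u^r = u^s := by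
      rcases lt_or_gt_of_ne hne with h | h
      · exact ⟨i, j, h, hij⟩
      · exact ⟨j, i, h, hij.symm⟩
    set q := s - r with hqdef
    have hq : 1 ≤ q := by omega
    have hupow : ∀ n : ℕ, r ≤ n → u^(n+q) = u^n := by
      intro n hn
      have h1 : n + q = (n - r) + s := by omega
      have h2 : n = (n - r) + r := by omega
      rw [h1, pow_add, ← hu2, ← pow_add, ← h2]
    have hcast : ∀ n : ℕ,
        ((w n : ℤ) : ZMod D) = (A : ZMod D) * u^n + ((B - d*(ℓ:ℤ) : ℤ) : ZMod D) := by
      intro n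
      show ((A * (p:ℤ)^(k*n) + B - d*(ℓ:ℤ) : ℤ) : ZMod D) = _
      push_cast
      rw [pow_mul, ← hu]
      ring
    have hdvd : ∀ n : ℕ, r ≤ n → (d*m ∣ w n ↔ d*m ∣ w (n+q)) := by
      intro n hn
      rw [← hDcast, ← ZMod.intCast_zmod_eq_zero_iff_dvd, ← ZMod.intCast_zmod_eq_zero_iff_dvd,
        hcast, hcast, hupow n hn]
    set n₀ : ℕ := (d*(ℓ:ℤ) - B).toNat with hn₀
    have hpos : ∀ n : ℕ, n₀ ≤ n → 0 ≤ w n := by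
      intro n hn
      have h1 : (n:ℤ) + 1 ≤ (p:ℤ)^(k*n) := hgrow n
      have h2 : 1 ≤ A := hA0
      have h3 : d*(ℓ:ℤ) - B ≤ (n₀:ℤ) := Int.self_le_toNat _
      have h4 : (n₀:ℤ) ≤ n := by exact_mod_cast hn
      show (0:ℤ) ≤ A * (p:ℤ)^(k*n) + B - d*(ℓ:ℤ)
      nlinarith
    refine ⟨max r n₀, q, hq, fun n hn => ?_⟩
    rw [hiff n, hiff (n+q)]
    have h1 := hdvd n (le_trans (le_max_left _ _) hn)
    have h2 := hpos n (le_trans (le_max_right _ _) hn)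
    have h3 := hpos (n+q) (le_trans (le_trans (le_max_right _ _) hn) (Nat.le_add_right _ _))
    constructor
    · rintro ⟨hdv, _⟩; exact ⟨h1.mp hdv, h3⟩
    · rintro ⟨hdv, _⟩; exact ⟨h1.mpr hdv, h2⟩


theorem stmt3 (p : ℕ) (hp : p.Prime) (m ℓ : ℕ) (hm : 1 ≤ m) (a b : ℚ) (k : ℕ) :
    IsFinUnionPArith p
      ({x : ℚ | ∃ j : ℕ, x = (m : ℚ) * j + ℓ} ∩
        {x : ℚ | ∃ n : ℕ, x = a * (p : ℚ) ^ (k * n) + b}) := by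
  obtain ⟨N₁, q, hq, hper⟩ := key p hp m ℓ hm a b k
  exact decomp p a b k _ N₁ q hq hper
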